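/- For n ≡ 3 (mod 4), every clique of size n-3 in the distance-√r graph on ℚⁿ extends: if P₁, …, P_{n-3} ∈ ℚⁿ are pairwise at distance √r (r a positive integer), then there exists P ∈ ℚⁿ at distance √r from each Pᵢ. Consequently ω(ℚⁿ, √r) ≥ n - 2, and C₁(ℚⁿ) - c₁(ℚⁿ) ≤ 3. -/

import Mathlib

set_option maxHeartbeats 1000000

namespace S15


variable {ι : Type*} [Fintype ι]

/-- rational dot product on `ι → ℚ` -/
def dot (x y : ι → ℚ) : ℚ := ∑ i, x i * y i

lemma dot_comm (x y : ι → ℚ) : dot x y = dot y x :=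
  Finset.sum_congr rfl fun i _ => mul_comm _ _

lemma dot_sub_left (x y z : ι → ℚ) : dot (x - y) z = dot x z - dot y z := by
  simp [dot, sub_mul, Finset.sum_sub_distrib]

lemma dot_sub_right (x y z : ι → ℚ) : dot x (y - z) = dot x y - dot x z := by
  simp [dot, mul_sub, Finset.sum_sub_distrib]

lemma dot_add_left (x y z : ι → ℚ) : dot (x + y) z = dot x z + dot y z := by
  simp [dot, add_mul, Finset.sum_add_distrib]

lemma dot_add_right (x y z : ι → ℚ) : dot x (y + z) = dot x y + dot x z := by
  simp [dot, mul_add, Finset.sum_add_distrib]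

lemma dot_smul_left (c : ℚ) (x y : ι → ℚ) : dot (c • x) y = c * dot x y := by
  simp [dot, Finset.mul_sum, mul_assoc]

lemma dot_smul_right (c : ℚ) (x y : ι → ℚ) : dot x (c • y) = c * dot x y := by
  simp [dot, Finset.mul_sum]; exact Finset.sum_congr rfl fun i _ => by ring

lemma dot_zero_left (y : ι → ℚ) : dot 0 y = 0 := by simp [dot]

lemma dot_self_nonneg (x : ι → ℚ) : 0 ≤ dot x x :=
  Finset.sum_nonneg fun i _ => mul_self_nonneg _

lemma dot_self_eq_zero {x : ι → ℚ} (h : dot x x = 0) : x = 0 := by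
  funext i
  have h2 : ∀ j ∈ Finset.univ, (0:ℚ) ≤ x j * x j := fun j _ => mul_self_nonneg _
  have := (Finset.sum_eq_zero_iff_of_nonneg h2).mp h i (Finset.mem_univ i)
  have := mul_self_eq_zero.mp this
  simpa using this

lemma dot_self_eq_sum_sq (x y : ι → ℚ) : ∑ i, (x i - y i)^2 = dot (x - y) (x - y) := by
  simp [dot, pow_two]

/-- polarization -/
lemma dot_polar (x y : ι → ℚ) :
    dot x y = (dot x x + dot y y - dot (x - y) (x - y)) / 2 := by
  rw [dot_sub_left, dot_sub_right, dot_sub_right, dot_comm y x]; ring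

/-- transfer lemma: families with equal Gram matrices are related by a
dot-product-preserving self-map (Witt-style, via reflections). -/
lemma transfer (N : ℕ) (u v : Fin N → ι → ℚ)
    (h : ∀ i j, dot (u i) (u j) = dot (v i) (v j)) :
    ∃ f : (ι → ℚ) → (ι → ℚ), (∀ x y, dot (f x) (f y) = dot x y) ∧ ∀ i, f (u i) = v i := by
  induction N with
  | zero => exact ⟨id, fun x y => rfl, fun i => i.elim0⟩
  | succ N ih =>
    obtain ⟨f₀, hf₀, hmatch⟩ := ih (fun i => u i.castSucc) (fun i => v i.castSucc)
      (fun i j => h i.castSucc j.castSucc)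
    set a := f₀ (u (Fin.last N)) with ha
    set b := v (Fin.last N) with hb
    have haa : dot a a = dot b b := by
      rw [ha, hb, hf₀]; exact h _ _
    have hab : ∀ i : Fin N, dot a (v i.castSucc) = dot b (v i.castSucc) := by
      intro i
      have : dot a (v i.castSucc) = dot (u (Fin.last N)) (u i.castSucc) := by
        rw [ha, ← hmatch i, hf₀]
      rw [this, h (Fin.last N) i.castSucc, hb]
    by_cases hd : a - b = 0
    · refine ⟨f₀, hf₀, fun i => ?_⟩
      refine Fin.lastCases ?_ (fun i => hmatch i) i
      rw [← ha, ← hb]; exact sub_eq_zero.mp hd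
    · set d := a - b with hdd
      have hD : dot d d ≠ 0 := fun hc => hd (dot_self_eq_zero hc)
      set g : (ι → ℚ) → (ι → ℚ) := fun x => x - (2 * dot x d / dot d d) • d with hg
      have exp : ∀ (s t : ℚ) (x y : ι → ℚ), dot (x - s • d) (y - t • d) =
          dot x y - t * dot x d - s * dot y d + s * t * dot d d := by
        intro s t x y
        rw [dot_sub_left, dot_sub_right, dot_sub_right, dot_smul_right, dot_smul_left,
          dot_smul_left, dot_smul_right, dot_comm d y]
        ring
      have hgdot : ∀ x y, dot (g x) (g y) = dot x y := by
        intro x y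
        rw [hg]
        simp only []
        rw [exp]
        field_simp
        ring
      have hkey : dot a d = dot d d / 2 := by
        have : dot d d = dot a a - dot a b - (dot b a - dot b b) := by
          rw [hdd, dot_sub_left, dot_sub_right, dot_sub_right]
        rw [hdd, dot_sub_right]
        rw [this, haa, dot_comm b a]
        ring
      have hga : g a = b := by
        rw [hg]
        simp only []
        rw [hkey]
        have : 2 * (dot d d / 2) / dot d d = 1 := by field_simp
        rw [this, one_smul, hdd]
        abel
      refine ⟨g ∘ f₀, fun x y => by rw [Function.comp_apply, Function.comp_apply, hgdot, hf₀],
        fun i => ?_⟩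
      refine Fin.lastCases ?_ (fun i => ?_) i
      · rw [Function.comp_apply, ← ha, hga, hb]
      · rw [Function.comp_apply, hmatch i, hg]
        simp only []
        have hz : dot (v i.castSucc) d = 0 := by
          rw [hdd, dot_sub_right, dot_comm _ a, dot_comm _ b, hab i, sub_self]
        rw [hz]
        simp

/-- distances determine the Gram matrix of the difference family -/
lemma gram_of_clique {M : ℕ} (r : ℚ) (p : Fin M → ι → ℚ) (z : Fin M)
    (hp : ∀ i j, i ≠ j → dot (p i - p j) (p i - p j) = r) :
    ∀ i j, dot (p i - p z) (p j - p z) =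
      if i = z ∨ j = z then 0 else if i = j then r else r/2 := by
  intro i j
  by_cases hi : i = z
  · subst hi; simp [dot_zero_left]
  by_cases hj : j = z
  · subst hj; rw [dot_comm]; simp [dot_zero_left, hi]
  by_cases hij : i = j
  · subst hij
    rw [if_neg (by tauto), if_pos rfl]
    exact hp i z hi
  · have e1 : dot (p i - p z) (p i - p z) = r := hp i z hi
    have e2 : dot (p j - p z) (p j - p z) = r := hp j z hj
    have e3 : (p i - p z) - (p j - p z) = p i - p j := by abel
    rw [dot_polar, e1, e2, e3, hp i j hij, if_neg (by tauto), if_neg hij]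
    ring

/-- the main geometric step: any clique of size `M` extends, provided some clique
of size `M+1` exists. -/
lemma extend_of_model {M : ℕ} (hM : 0 < M) (r : ℚ)
    (C : Fin (M+1) → ι → ℚ)
    (hC : ∀ i j, i ≠ j → dot (C i - C j) (C i - C j) = r)
    (P : Fin M → ι → ℚ)
    (hP : ∀ i j, i ≠ j → dot (P i - P j) (P i - P j) = r) :
    ∃ Q : ι → ℚ, ∀ i, dot (Q - P i) (Q - P i) = r := by
  set z : Fin M := ⟨0, hM⟩ with hz
  set u : Fin M → ι → ℚ := fun i => C i.castSucc - C z.castSucc with hu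
  set v : Fin M → ι → ℚ := fun i => P i - P z with hv
  have hgu := gram_of_clique r C z.castSucc hC
  have hgv := gram_of_clique r P z hP
  have hgram : ∀ i j, dot (u i) (u j) = dot (v i) (v j) := by
    intro i j
    rw [hu, hv]
    simp only []
    rw [hgu i.castSucc j.castSucc, hgv i j]
    simp only [Fin.castSucc_inj]
  obtain ⟨f, hf, hfm⟩ := transfer M u v hgram
  set w : ι → ℚ := C (Fin.last M) - C z.castSucc with hw
  have iso_sub : ∀ x y, dot (f x - f y) (f x - f y) = dot (x - y) (x - y) := by
    intro x y
    simp only [dot_sub_left, dot_sub_right, hf]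
  refine ⟨P z + f w, fun i => ?_⟩
  have expand : P z + f w - P i = f w - f (u i) := by rw [hfm i, hv]; funext k; simp only [Pi.add_apply, Pi.sub_apply]; ring
  rw [expand, iso_sub w (u i)]
  have hwu : w - u i = C (Fin.last M) - C i.castSucc := by rw [hw, hu]; funext k; simp only [Pi.sub_apply]; ring
  rw [hwu]
  exact hC _ _ (Fin.castSucc_lt_last i).ne'




lemma sq_mod8_eq_one {x : ℕ} (hx : Odd x) : x^2 % 8 = 1 := by
  obtain ⟨t, rfl⟩ := hx
  rcases Nat.even_or_odd t with ⟨s, rfl⟩ | ⟨s, rfl⟩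
  · have : (2*(s+s)+1)^2 = 8*(2*s^2+s) + 1 := by ring
    omega
  · have : (2*(2*s+1)+1)^2 = 8*(2*s^2+3*s+1) + 1 := by ring
    omega

/-- pigeonhole Legendre-type lemma for `x² + B y² = n z²` -/
lemma legendre_special (B n : ℕ) (hB : 1 < B) (hn : 1 < n)
    (hsqB : ¬ IsSquare B) (hsqn : ¬ IsSquare n) (hsqBn : ¬ IsSquare (B * n))
    (hcop : Nat.Coprime B n)
    (hd : (n : ℤ) ∣ (B : ℤ) + 1)
    (hrho : ∃ ρ : ℤ, (B : ℤ) ∣ ρ^2 - (n : ℤ)) :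
    ∃ x y z : ℤ, x^2 + (B:ℤ) * y^2 = (n:ℤ) * z^2 ∧ z ≠ 0 := by
  obtain ⟨ρ, hρ⟩ := hrho
  set X := Nat.sqrt (B*n) + 1 with hX
  set Y := Nat.sqrt n + 1 with hY
  set Z := Nat.sqrt B + 1 with hZ
  haveI : NeZero n := ⟨by omega⟩
  haveI : NeZero B := ⟨by omega⟩
  have e1 : B*n < X^2 := by
    simpa [hX, Nat.succ_eq_add_one] using Nat.lt_succ_sqrt' (B*n)
  have e2 : n < Y^2 := by
    simpa [hY, Nat.succ_eq_add_one] using Nat.lt_succ_sqrt' n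
  have e3 : B < Z^2 := by
    simpa [hZ, Nat.succ_eq_add_one] using Nat.lt_succ_sqrt' B
  have hXYZ : B * n < X * (Y * Z) := by
    by_contra hcon
    push_neg at hcon
    have h1 : n*B < Y^2 * Z^2 := Nat.mul_lt_mul'' e2 e3
    have h2 : (B*n)*(n*B) < X^2 * (Y^2*Z^2) := Nat.mul_lt_mul'' e1 h1
    have h3 : X^2 * (Y^2*Z^2) = (X*(Y*Z))^2 := by ring
    have h4 : (X*(Y*Z))^2 ≤ (B*n)^2 := Nat.pow_le_pow_left hcon 2
    have h5 : (B*n)*(n*B) = (B*n)^2 := by ring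
    omega
  have hcard : Fintype.card (ZMod n × ZMod B) < Fintype.card (Fin X × Fin Y × Fin Z) := by
    simp only [Fintype.card_prod, Fintype.card_fin, ZMod.card]
    rw [mul_comm n B]
    exact hXYZ
  set F : Fin X × Fin Y × Fin Z → ZMod n × ZMod B :=
    fun t => (((t.1 : ℕ) : ZMod n) - ((t.2.1 : ℕ) : ZMod n),
              ((t.1 : ℕ) : ZMod B) - (ρ : ZMod B) * ((t.2.2 : ℕ) : ZMod B)) with hF
  obtain ⟨t₁, t₂, hne, heq⟩ := Fintype.exists_ne_map_eq_of_card_lt F hcard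
  set x : ℤ := (t₁.1 : ℕ) - ((t₂.1 : ℕ) : ℤ) with hx
  set y : ℤ := (t₁.2.1 : ℕ) - ((t₂.2.1 : ℕ) : ℤ) with hy
  set z : ℤ := (t₁.2.2 : ℕ) - ((t₂.2.2 : ℕ) : ℤ) with hz
  have hdvd1 : (n : ℤ) ∣ x - y := by
    have h1 := congrArg Prod.fst heq
    simp only [hF] at h1
    have hc : ((x - y : ℤ) : ZMod n) = 0 := by
      rw [hx, hy]
      push_cast
      linear_combination h1
    exact (ZMod.intCast_zmod_eq_zero_iff_dvd _ _).mp hc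
  have hdvd2 : (B : ℤ) ∣ x - ρ * z := by
    have h2 := congrArg Prod.snd heq
    simp only [hF] at h2
    have hc : ((x - ρ * z : ℤ) : ZMod B) = 0 := by
      rw [hx, hz]
      push_cast
      linear_combination h2
    exact (ZMod.intCast_zmod_eq_zero_iff_dvd _ _).mp hc
  have bnd : ∀ (W : ℕ) (a b : Fin (Nat.sqrt W + 1)),
      (((a:ℕ):ℤ) - ((b:ℕ):ℤ))^2 ≤ ((Nat.sqrt W : ℤ))^2 := by
    intro W a b
    have ha : ((a:ℕ):ℤ) ≤ Nat.sqrt W := by exact_mod_cast Nat.lt_succ_iff.mp a.isLt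
    have hb : ((b:ℕ):ℤ) ≤ Nat.sqrt W := by exact_mod_cast Nat.lt_succ_iff.mp b.isLt
    have ha0 : (0:ℤ) ≤ (a:ℕ) := Int.natCast_nonneg _
    have hb0 : (0:ℤ) ≤ (b:ℕ) := Int.natCast_nonneg _
    exact sq_le_sq' (by linarith) (by linarith)
  have hzero : ¬ (x = 0 ∧ y = 0 ∧ z = 0) := by
    rintro ⟨hx0, hy0, hz0⟩
    apply hne
    have e1 : t₁.1 = t₂.1 := by
      apply Fin.ext
      have h : ((t₁.1 : ℕ) : ℤ) = ((t₂.1 : ℕ) : ℤ) := by rw [hx] at hx0; omega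
      exact_mod_cast h
    have e2 : t₁.2.1 = t₂.2.1 := by
      apply Fin.ext
      have h : ((t₁.2.1 : ℕ) : ℤ) = ((t₂.2.1 : ℕ) : ℤ) := by rw [hy] at hy0; omega
      exact_mod_cast h
    have e3 : t₁.2.2 = t₂.2.2 := by
      apply Fin.ext
      have h : ((t₁.2.2 : ℕ) : ℤ) = ((t₂.2.2 : ℕ) : ℤ) := by rw [hz] at hz0; omega
      exact_mod_cast h
    exact Prod.ext e1 (Prod.ext e2 e3)
  have hxb : x^2 ≤ ((Nat.sqrt (B*n) : ℤ))^2 := by rw [hx]; exact bnd (B*n) t₁.1 t₂.1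
  have hyb : y^2 ≤ ((Nat.sqrt n : ℤ))^2 := by rw [hy]; exact bnd n t₁.2.1 t₂.2.1
  have hzb : z^2 ≤ ((Nat.sqrt B : ℤ))^2 := by rw [hz]; exact bnd B t₁.2.2 t₂.2.2
  clear_value x y z
  clear hx hy hz heq hne hF
  set N : ℤ := x^2 + B * y^2 - n * z^2 with hN
  have hNdvd : ((B:ℤ) * n) ∣ N := by
    have c1 : (n:ℤ) ∣ N := by
      have d1 : (n:ℤ) ∣ x^2 - y^2 := by
        have h : x^2 - y^2 = (x - y) * (x + y) := by ring
        rw [h]; exact Dvd.dvd.mul_right hdvd1 _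
      have d2 : (n:ℤ) ∣ ((B:ℤ)+1) * y^2 := Dvd.dvd.mul_right hd _
      have h : N = (x^2 - y^2) + ((B:ℤ)+1) * y^2 - n * z^2 := by rw [hN]; ring
      rw [h]
      exact dvd_sub (dvd_add d1 d2) ⟨z^2, rfl⟩
    have c2 : (B:ℤ) ∣ N := by
      have d1 : (B:ℤ) ∣ x^2 - ρ^2 * z^2 := by
        have h : x^2 - ρ^2 * z^2 = (x - ρ*z) * (x + ρ*z) := by ring
        rw [h]; exact Dvd.dvd.mul_right hdvd2 _
      have d2 : (B:ℤ) ∣ (ρ^2 - (n:ℤ)) * z^2 := Dvd.dvd.mul_right hρ _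
      have h : N = (x^2 - ρ^2*z^2) + (ρ^2 - (n:ℤ)) * z^2 + B * y^2 := by rw [hN]; ring
      rw [h]
      exact dvd_add (dvd_add d1 d2) ⟨y^2, rfl⟩
    have hcI : IsCoprime (B:ℤ) (n:ℤ) := by
      rw [Int.isCoprime_iff_gcd_eq_one]
      simpa using hcop
    exact IsCoprime.mul_dvd hcI c2 c1
  -- bounds
  have sqlt : ∀ (W : ℕ) (w : ℤ), (¬ IsSquare W) → w^2 ≤ ((Nat.sqrt W : ℤ))^2 → w^2 < W := by
    intro W w hsq hle
    have h1 : ((Nat.sqrt W : ℤ))^2 ≤ (W:ℤ) := by exact_mod_cast Nat.sqrt_le' W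
    have h2 : w^2 ≠ (W:ℤ) := by
      intro hcon
      refine hsq ⟨w.natAbs, ?_⟩
      have h3 : (W:ℤ) = (w.natAbs : ℤ) * w.natAbs := by
        rw [Int.natAbs_mul_self', ← hcon]
        ring
      exact_mod_cast h3
    exact lt_of_le_of_ne (le_trans hle h1) h2
  have hx2 : x^2 < (B:ℤ)*n := by
    have h := sqlt (B*n) x hsqBn hxb
    exact_mod_cast h
  have hy2 : y^2 < (n:ℤ) := sqlt n y hsqn hyb
  have hz2 : z^2 < (B:ℤ) := sqlt B z hsqB hzb
  have hB0 : (0:ℤ) < B := by exact_mod_cast (by omega : 0 < B)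
  have hn0 : (0:ℤ) < n := by exact_mod_cast (by omega : 0 < n)
  have hNub : N < 2 * ((B:ℤ) * n) := by
    have h : (B:ℤ) * y^2 < B * n := (mul_lt_mul_iff_right₀ hB0).mpr hy2
    have h2 : (0:ℤ) ≤ n * z^2 := by positivity
    rw [hN]; nlinarith
  have hNlb : -((B:ℤ) * n) < N := by
    have h : (n:ℤ) * z^2 < n * B := (mul_lt_mul_iff_right₀ hn0).mpr hz2
    have h2 : (0:ℤ) ≤ x^2 + B*y^2 := by positivity
    rw [hN]; nlinarith
  obtain ⟨t, ht⟩ := hNdvd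
  have hBn0 : (0:ℤ) < (B:ℤ)*n := by positivity
  have ht01 : t = 0 ∨ t = 1 := by
    rw [ht] at hNub hNlb
    have h4 : -1 < t := by
      have h' : (B:ℤ)*n*(-1) < (B:ℤ)*n*t := by linarith
      exact lt_of_mul_lt_mul_left h' (le_of_lt hBn0)
    have h5 : t < 2 := by
      have h' : (B:ℤ)*n*t < (B:ℤ)*n*2 := by linarith
      exact lt_of_mul_lt_mul_left h' (le_of_lt hBn0)
    omega
  rcases ht01 with rfl | rfl
  · -- N = 0
    have h0 : x^2 + (B:ℤ)*y^2 - n*z^2 = 0 := by rw [← hN, ht]; ring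
    have hsol : x^2 + (B:ℤ)*y^2 = n * z^2 := by linarith
    have hznz : z ≠ 0 := by
      intro hz0
      rw [hz0] at hsol
      have hx0 : x = 0 := by nlinarith [sq_nonneg x, sq_nonneg y]
      have hy0 : y = 0 := by nlinarith [sq_nonneg x, sq_nonneg y]
      exact hzero ⟨hx0, hy0, hz0⟩
    exact ⟨x, y, z, hsol, hznz⟩
  · -- N = B*n
    refine ⟨x*z + B*y, y*z - x, z^2 + B, ?_, by positivity⟩
    have hNval : x^2 + (B:ℤ)*y^2 - n*z^2 = B*n := by rw [← hN, ht]; ring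
    linear_combination ((z:ℤ)^2 + (B:ℤ)) * hNval




lemma prime_not_isSquare {p : ℕ} (hp : p.Prime) : ¬ IsSquare p := by
  rintro ⟨r, hr⟩
  have hdvd : r ∣ p := ⟨r, hr⟩
  rcases (Nat.Prime.eq_one_or_self_of_dvd hp r hdvd) with h | h
  · rw [h] at hr; simp at hr; exact hp.ne_one hr
  · rw [h] at hr; nlinarith [hp.two_le]

lemma squarefree_not_isSquare {n : ℕ} (h : Squarefree n) (hn : 1 < n) : ¬ IsSquare n := by
  rintro ⟨r, hr⟩
  have : IsUnit r := h r (by rw [hr])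
  have : r = 1 := Nat.isUnit_iff.mp this
  subst this; omega

lemma not_sq_of_prime_once {ℓ : ℕ} (hℓ : ℓ.Prime) (K : ℕ) (h1 : ℓ ∣ K)
    (h2 : ¬ (ℓ*ℓ) ∣ K) : ¬ IsSquare K := by
  rintro ⟨r, rfl⟩
  have hr : ℓ ∣ r := by
    rcases (Nat.Prime.dvd_mul hℓ).mp h1 with h | h <;> exact h
  exact h2 (mul_dvd_mul hr hr)

lemma isUnit_pair {M N : Type*} [Monoid M] [Monoid N] {a : M} {b : N}
    (ha : IsUnit a) (hb : IsUnit b) : IsUnit (a, b) := by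
  obtain ⟨a', ha'1, ha'2⟩ := isUnit_iff_exists.mp ha
  obtain ⟨b', hb'1, hb'2⟩ := isUnit_iff_exists.mp hb
  apply isUnit_iff_exists.mpr
  exact ⟨(a', b'), by rw [Prod.mk_mul_mk, ha'1, hb'1]; rfl,
    by rw [Prod.mk_mul_mk, ha'2, hb'2]; rfl⟩

/-- Dirichlet + CRT for two coprime moduli -/
lemma crt_prime {m₁ m₂ : ℕ} (hm₁ : 0 < m₁) (hm₂ : 0 < m₂) (hco : Nat.Coprime m₁ m₂)
    (a₁ : ZMod m₁) (a₂ : ZMod m₂) (h₁ : IsUnit a₁) (h₂ : IsUnit a₂) (bound : ℕ) :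
    ∃ ℓ : ℕ, ℓ.Prime ∧ bound < ℓ ∧ ((ℓ : ZMod m₁) = a₁) ∧ ((ℓ : ZMod m₂) = a₂) := by
  haveI : NeZero (m₁ * m₂) := ⟨by positivity⟩
  set e := ZMod.chineseRemainder hco with he
  set a := e.symm (a₁, a₂) with ha
  have hua : IsUnit a := by
    rw [ha]
    exact IsUnit.map (e.symm : ZMod m₁ × ZMod m₂ →+* ZMod (m₁ * m₂)) (isUnit_pair h₁ h₂)
  obtain ⟨ℓ, hgt, hp, hcast⟩ := Nat.forall_exists_prime_gt_and_eq_mod hua bound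
  have h2 : ((ℓ : ℕ) : ZMod m₁ × ZMod m₂) = (a₁, a₂) := by
    have := congrArg e hcast
    rw [map_natCast e ℓ] at this
    rw [this, ha]
    exact e.apply_symm_apply _
  refine ⟨ℓ, hp, hgt, ?_, ?_⟩
  · have := congrArg Prod.fst h2
    simpa using this
  · have := congrArg Prod.snd h2
    simpa using this

lemma odd_prime_of_gt {ℓ : ℕ} (hp : ℓ.Prime) (h : 2 < ℓ) : Odd ℓ :=
  hp.odd_of_ne_two (by omega)


lemma sqrt_mod_prime {ℓ n : ℕ} [Fact ℓ.Prime] (hlt : n < ℓ) (hn0 : 0 < n)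
    (hJ : jacobiSym (n:ℤ) ℓ = 1) : ∃ ρ:ℤ, (ℓ:ℤ) ∣ ρ^2 - (n:ℤ) := by
  have hne : ((n:ℕ) : ZMod ℓ) ≠ 0 := by
    intro hcon
    have := (ZMod.natCast_eq_zero_iff n ℓ).mp hcon
    have := Nat.le_of_dvd hn0 this
    omega
  have hleg : legendreSym ℓ (n:ℤ) = 1 := by
    rw [jacobiSym.legendreSym.to_jacobiSym]
    exact hJ
  have hsq : IsSquare ((n:ℤ) : ZMod ℓ) :=
    (legendreSym.eq_one_iff ℓ (by exact_mod_cast hne)).mp hleg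
  obtain ⟨s, hs⟩ := hsq
  refine ⟨(s.val : ℤ), ?_⟩
  push_cast at hs
  have : ((s.val^2 - (n:ℤ) : ℤ) : ZMod ℓ) = 0 := by
    push_cast
    rw [ZMod.natCast_val, ZMod.cast_id, sq, ← hs]
    simp
  exact (ZMod.intCast_zmod_eq_zero_iff_dvd _ _).mp this

/-- main arithmetic data lemma -/
lemma exists_sq3_data (n : ℕ) (hn : 1 < n) (hsf : Squarefree n) (h8 : n % 8 ≠ 7) :
    ∃ B : ℕ, 1 < B ∧ ¬IsSquare B ∧ ¬IsSquare (B*n) ∧ Nat.Coprime B n ∧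
      ((n:ℤ) ∣ (B:ℤ) + 1) ∧ (∃ ρ:ℤ, (B:ℤ) ∣ ρ^2 - (n:ℤ)) ∧
      (∃ u v : ℤ, u^2 + v^2 = (B:ℤ)) := by
  have hn0 : 0 < n := by omega
  rcases Nat.even_or_odd n with hev | hodd
  · -- n even
    obtain ⟨n₀, hn₀'⟩ := hev
    have hn₀ : n = 2 * n₀ := by omega
    have hodd₀ : Odd n₀ := by
      rcases Nat.even_or_odd n₀ with ⟨s, hs⟩ | h
      · exfalso
        have : ¬ IsUnit 2 := by decide
        exact this (hsf 2 (by subst hn₀ hs; exact ⟨s, by ring⟩))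
      · exact h
    have hsf₀ : Squarefree n₀ := hsf.squarefree_of_dvd ⟨2, by omega⟩
    have hco8 : Nat.Coprime 8 n₀ := by
      have h2 : Nat.Coprime 2 n₀ := Nat.coprime_two_left.mpr hodd₀
      have := Nat.Coprime.pow_left 3 h2
      simpa using this
    have hn₀0 : 0 < n₀ := by omega
    set a₁ : ZMod 8 := if n₀ % 4 = 1 then 1 else 5 with ha₁
    have hu₁ : IsUnit a₁ := by
      rw [ha₁]
      split
      · exact isUnit_one
      · exact IsUnit.of_mul_eq_one 5 (by decide)
    have hu₂ : IsUnit (-1 : ZMod n₀) := isUnit_one.neg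
    obtain ⟨ℓ, hp, hgt, hc8, hcn₀⟩ := crt_prime (by norm_num) hn₀0 hco8 a₁ (-1) hu₁ hu₂ (2*n+4)
    haveI : Fact ℓ.Prime := ⟨hp⟩
    have hℓodd : Odd ℓ := odd_prime_of_gt hp (by omega)
    have hℓ8 : ℓ % 8 = 1 ∨ ℓ % 8 = 5 := by
      rw [ha₁] at hc8
      by_cases h4 : n₀ % 4 = 1
      · left
        rw [if_pos h4] at hc8
        have := (ZMod.natCast_eq_natCast_iff ℓ 1 8).mp (by exact_mod_cast hc8)
        simpa [Nat.ModEq] using this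
      · right
        rw [if_neg h4] at hc8
        have := (ZMod.natCast_eq_natCast_iff ℓ 5 8).mp (by exact_mod_cast hc8)
        simpa [Nat.ModEq] using this
    have hℓ4 : ℓ % 4 = 1 := by omega
    -- divisibility n ∣ ℓ + 1
    have hdn₀ : (n₀:ℤ) ∣ (ℓ:ℤ) + 1 := by
      have : (((ℓ:ℤ) + 1 : ℤ) : ZMod n₀) = 0 := by
        push_cast
        rw [hcn₀]
        ring
      exact (ZMod.intCast_zmod_eq_zero_iff_dvd _ _).mp this
    have hd2 : (2:ℤ) ∣ (ℓ:ℤ) + 1 := by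
      obtain ⟨t, ht⟩ := hℓodd
      exact ⟨t+1, by push_cast [ht]; ring⟩
    have hdn : (n:ℤ) ∣ (ℓ:ℤ) + 1 := by
      have hcop : IsCoprime (2:ℤ) (n₀:ℤ) := by
        rw [Int.isCoprime_iff_gcd_eq_one, show ((2:ℤ)) = ((2:ℕ):ℤ) by norm_num,
          Int.gcd_natCast_natCast]
        exact Nat.coprime_two_left.mpr hodd₀
      have := IsCoprime.mul_dvd hcop hd2 hdn₀
      rwa [show ((2:ℤ)*n₀) = (n:ℤ) by push_cast [hn₀]; ring] at this
    -- Jacobi computation : J(n | ℓ) = 1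
    have hmodn₀ : ((ℓ:ℤ) % (n₀:ℤ)) = ((-1 : ℤ) % (n₀:ℤ)) := by
      have hh : ((n₀:ℤ)) ∣ (-1) - (ℓ:ℤ) := by
        have e : (-1 : ℤ) - ℓ = -((ℓ:ℤ)+1) := by ring
        rw [e]
        exact dvd_neg.mpr hdn₀
      exact Int.modEq_iff_dvd.mpr hh
    have hJ : jacobiSym (n:ℤ) ℓ = 1 := by
      have e0 : ((n:ℕ):ℤ) = (2:ℤ) * (n₀:ℕ) := by push_cast [hn₀]; ring
      rw [e0, jacobiSym.mul_left]
      have e1 : jacobiSym (2:ℤ) ℓ = ZMod.χ₈ ℓ := jacobiSym.at_two hℓodd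
      have e2 : jacobiSym ((n₀:ℕ):ℤ) ℓ = jacobiSym ((ℓ:ℕ):ℤ) n₀ :=
        (jacobiSym.quadratic_reciprocity_one_mod_four hℓ4 hodd₀).symm
      have e3 : jacobiSym ((ℓ:ℕ):ℤ) n₀ = jacobiSym (-1 : ℤ) n₀ := jacobiSym.mod_left' hmodn₀
      have e4 : jacobiSym (-1:ℤ) n₀ = ZMod.χ₄ n₀ := jacobiSym.at_neg_one hodd₀
      rw [e1, e2, e3, e4]
      rw [ZMod.χ₈_nat_eq_if_mod_eight, ZMod.χ₄_nat_eq_if_mod_four]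
      have hn₀4 : n₀ % 4 = 1 ∨ n₀ % 4 = 3 := by
        rcases hodd₀ with ⟨t, ht⟩
        omega
      rcases hn₀4 with h4 | h4
      · have h81 : ℓ % 8 = 1 := by
          rcases hℓ8 with h | h
          · exact h
          · exfalso
            rw [ha₁, if_pos h4] at hc8
            have := (ZMod.natCast_eq_natCast_iff ℓ 1 8).mp (by exact_mod_cast hc8)
            simp [Nat.ModEq] at this
            omega
        rw [if_neg (by omega), if_pos (by omega), if_neg (by omega), if_pos h4]
        norm_num
      · have h85 : ℓ % 8 = 5 := by
          rcases hℓ8 with h | h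
          · exfalso
            rw [ha₁, if_neg (by omega)] at hc8
            have := (ZMod.natCast_eq_natCast_iff ℓ 5 8).mp (by exact_mod_cast hc8)
            simp [Nat.ModEq] at this
            omega
          · exact h
        rw [if_neg (by omega), if_neg (by omega), if_neg (by omega), if_neg (by omega)]
        norm_num
    -- square root of n mod ℓ
    have hρ : ∃ ρ:ℤ, (ℓ:ℤ) ∣ ρ^2 - (n:ℤ) := sqrt_mod_prime (by omega) hn0 hJ
    -- conclude
    have hℓn : ¬ ℓ ∣ n := fun hdvd => by
      have := Nat.le_of_dvd hn0 hdvd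
      omega
    refine ⟨ℓ, hp.one_lt, prime_not_isSquare hp, ?_, ?_, hdn, hρ, ?_⟩
    · apply not_sq_of_prime_once hp (ℓ*n) (dvd_mul_right _ _)
      intro hcon
      have := (mul_dvd_mul_iff_left (by omega : ℓ ≠ 0)).mp hcon
      exact hℓn this
    · exact (Nat.Prime.coprime_iff_not_dvd hp).mpr hℓn
    · obtain ⟨u, v, huv⟩ := Nat.Prime.sq_add_sq (p := ℓ) (by omega)
      exact ⟨u, v, by exact_mod_cast huv⟩
  · -- n odd
    have hco4 : Nat.Coprime 4 n := by
      have h2 : Nat.Coprime 2 n := Nat.coprime_two_left.mpr hodd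
      have := Nat.Coprime.pow_left 2 h2
      simpa using this
    have hn4 : n % 4 = 1 ∨ n % 8 = 3 := by
      have := Nat.mod_mod_of_dvd n (by norm_num : (4:ℕ) ∣ 8)
      rcases hodd with ⟨t, ht⟩
      omega
    rcases hn4 with hcase | hcase
    · -- n % 4 = 1, B = ℓ
      obtain ⟨ℓ, hp, hgt, hc4, hcn⟩ := crt_prime (by norm_num) (by omega) hco4 1 (-1)
        isUnit_one isUnit_one.neg (2*n+4)
      haveI : Fact ℓ.Prime := ⟨hp⟩
      have hℓodd : Odd ℓ := odd_prime_of_gt hp (by omega)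
      have hℓ4 : ℓ % 4 = 1 := by
        have := (ZMod.natCast_eq_natCast_iff ℓ 1 4).mp (by exact_mod_cast hc4)
        simpa [Nat.ModEq] using this
      have hdn : (n:ℤ) ∣ (ℓ:ℤ) + 1 := by
        have h0 : (((ℓ:ℤ) + 1 : ℤ) : ZMod n) = 0 := by push_cast; rw [hcn]; ring
        exact (ZMod.intCast_zmod_eq_zero_iff_dvd _ _).mp h0
      have hmodn : ((ℓ:ℤ) % (n:ℤ)) = ((-1 : ℤ) % (n:ℤ)) := by
        have hh : ((n:ℤ)) ∣ (-1) - (ℓ:ℤ) := by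
          have e : (-1 : ℤ) - ℓ = -((ℓ:ℤ)+1) := by ring
          rw [e]; exact dvd_neg.mpr hdn
        exact Int.modEq_iff_dvd.mpr hh
      have hJ : jacobiSym (n:ℤ) ℓ = 1 := by
        have e2 : jacobiSym ((n:ℕ):ℤ) ℓ = jacobiSym ((ℓ:ℕ):ℤ) n :=
          (jacobiSym.quadratic_reciprocity_one_mod_four hℓ4 hodd).symm
        have e3 : jacobiSym ((ℓ:ℕ):ℤ) n = jacobiSym (-1 : ℤ) n := jacobiSym.mod_left' hmodn
        have e4 : jacobiSym (-1:ℤ) n = ZMod.χ₄ n := jacobiSym.at_neg_one hodd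
        rw [e2, e3, e4]
        exact ZMod.χ₄_nat_one_mod_four hcase
      have hρ : ∃ ρ:ℤ, (ℓ:ℤ) ∣ ρ^2 - (n:ℤ) := sqrt_mod_prime (by omega) hn0 hJ
      have hℓn : ¬ ℓ ∣ n := fun hdvd => by
        have := Nat.le_of_dvd hn0 hdvd
        omega
      refine ⟨ℓ, hp.one_lt, prime_not_isSquare hp, ?_, ?_, hdn, hρ, ?_⟩
      · apply not_sq_of_prime_once hp (ℓ*n) (dvd_mul_right _ _)
        intro hcon
        have := (mul_dvd_mul_iff_left (by omega : ℓ ≠ 0)).mp hcon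
        exact hℓn this
      · exact (Nat.Prime.coprime_iff_not_dvd hp).mpr hℓn
      · obtain ⟨u, v, huv⟩ := Nat.Prime.sq_add_sq (p := ℓ) (by omega)
        exact ⟨u, v, by exact_mod_cast huv⟩
    · -- n % 8 = 3, B = 2ℓ
      set c : ℕ := (n+1)/2 with hcdef
      have hodd' : n % 2 = 1 := by
        rcases hodd with ⟨t, ht⟩; omega
      have hc2 : 2*c = n+1 := by omega
      have hc2' : (2:ZMod n) * (c:ℕ) = 1 := by
        have h0 : ((2*c:ℕ) : ZMod n) = ((n+1 : ℕ) : ZMod n) := by rw [hc2]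
        push_cast [ZMod.natCast_self] at h0
        linear_combination h0
      have hu₂ : IsUnit (-(c : ZMod n)) :=
        IsUnit.of_mul_eq_one (-2) (by linear_combination hc2')
      obtain ⟨ℓ, hp, hgt, hc4, hcn⟩ := crt_prime (by norm_num) (by omega) hco4 1
        (-(c : ZMod n)) isUnit_one hu₂ (2*n+4)
      haveI : Fact ℓ.Prime := ⟨hp⟩
      have hℓodd : Odd ℓ := odd_prime_of_gt hp (by omega)
      have hℓ2 : ℓ % 2 = 1 := by
        rcases hℓodd with ⟨t, ht⟩; omega
      have hℓ4 : ℓ % 4 = 1 := by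
        have := (ZMod.natCast_eq_natCast_iff ℓ 1 4).mp (by exact_mod_cast hc4)
        simpa [Nat.ModEq] using this
      have hdn : (n:ℤ) ∣ (2*(ℓ:ℤ)) + 1 := by
        have h0 : ((2*(ℓ:ℤ) + 1 : ℤ) : ZMod n) = 0 := by
          push_cast
          rw [hcn]
          linear_combination -hc2'
        exact (ZMod.intCast_zmod_eq_zero_iff_dvd _ _).mp h0
      have hJ : jacobiSym (n:ℤ) ℓ = 1 := by
        have e2 : jacobiSym ((n:ℕ):ℤ) ℓ = jacobiSym ((ℓ:ℕ):ℤ) n :=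
          (jacobiSym.quadratic_reciprocity_one_mod_four hℓ4 hodd).symm
        have hmod : ((4*(ℓ:ℤ)) % (n:ℤ)) = ((-2 : ℤ) % (n:ℤ)) := by
          have hh : ((n:ℤ)) ∣ (-2) - 4*(ℓ:ℤ) := by
            have e : (-2 : ℤ) - 4*ℓ = (-2) * (2*(ℓ:ℤ)+1) := by ring
            rw [e]
            exact Dvd.dvd.mul_left hdn (-2)
          exact Int.modEq_iff_dvd.mpr hh
        have hgcd2 : Int.gcd 2 (n:ℤ) = 1 := by
          rw [show ((2:ℤ)) = ((2:ℕ):ℤ) by norm_num, Int.gcd_natCast_natCast]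
          exact Nat.coprime_two_left.mpr hodd
        have e4 : jacobiSym (4:ℤ) n = 1 := by
          have : ((2:ℤ)^2) = 4 := by norm_num
          rw [← this]
          exact jacobiSym.sq_one' hgcd2
        have e5 : jacobiSym ((ℓ:ℕ):ℤ) n = jacobiSym (4*(ℓ:ℕ):ℤ) n := by
          rw [jacobiSym.mul_left]
          rw [e4]
          ring
        have e6 : jacobiSym (4*(ℓ:ℕ):ℤ) n = jacobiSym (-2 : ℤ) n := jacobiSym.mod_left' hmod
        have e7 : jacobiSym (-2:ℤ) n = ZMod.χ₈' n := jacobiSym.at_neg_two hodd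
        rw [e2, e5, e6, e7]
        rw [ZMod.χ₈'_nat_eq_if_mod_eight]
        rw [if_neg (by omega), if_pos (by omega)]
      obtain ⟨ρ₀, hρ₀⟩ : ∃ ρ:ℤ, (ℓ:ℤ) ∣ ρ^2 - (n:ℤ) := sqrt_mod_prime (by omega) hn0 hJ
      -- adjust parity
      obtain ⟨ρ, hρl, hρodd⟩ : ∃ ρ:ℤ, ((ℓ:ℤ) ∣ ρ^2 - (n:ℤ)) ∧ ρ % 2 = 1 := by
        rcases Int.even_or_odd ρ₀ with he | ho
        · refine ⟨ρ₀ + ℓ, ?_, ?_⟩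
          · have e : (ρ₀ + ℓ)^2 - (n:ℤ) = (ρ₀^2 - n) + ℓ * (2*ρ₀ + ℓ) := by ring
            rw [e]
            exact dvd_add hρ₀ ⟨2*ρ₀ + ℓ, rfl⟩
          · obtain ⟨t, ht⟩ := he
            omega
        · refine ⟨ρ₀, hρ₀, ?_⟩
          obtain ⟨t, ht⟩ := ho
          omega
      have hρ2 : (2:ℤ) ∣ ρ^2 - (n:ℤ) := by
        have : ρ^2 % 2 = 1 := by
          rcases Int.even_or_odd ρ with ⟨t, ht⟩ | ⟨t, ht⟩
          · omega
          · have : ρ^2 = 4*t^2+4*t+1 := by rw [ht]; ring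
            omega
        omega
      have hρB : ∃ ρ':ℤ, ((2*ℓ:ℕ):ℤ) ∣ ρ'^2 - (n:ℤ) := by
        refine ⟨ρ, ?_⟩
        have hcop2 : IsCoprime (2:ℤ) ((ℓ:ℕ):ℤ) := by
          rw [Int.isCoprime_iff_gcd_eq_one, show ((2:ℤ)) = ((2:ℕ):ℤ) by norm_num,
            Int.gcd_natCast_natCast]
          exact Nat.coprime_two_left.mpr hℓodd
        have := IsCoprime.mul_dvd hcop2 hρ2 hρl
        have e : ((2*ℓ:ℕ):ℤ) = 2 * (ℓ:ℤ) := by push_cast; ring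
        rwa [e]
      have hℓn : ¬ ℓ ∣ n := fun hdvd => by
        have := Nat.le_of_dvd hn0 hdvd
        omega
      have hℓnodd : Odd (ℓ * n) := hℓodd.mul hodd
      refine ⟨2*ℓ, by have := hp.two_le; omega, ?_, ?_, ?_, ?_, hρB, ?_⟩
      · apply not_sq_of_prime_once Nat.prime_two (2*ℓ) (dvd_mul_right _ _)
        intro hcon
        have h2ℓ : 2 ∣ ℓ := (mul_dvd_mul_iff_left (by omega : (2:ℕ) ≠ 0)).mp hcon
        rcases hℓodd with ⟨t, ht⟩
        omega
      · apply not_sq_of_prime_once Nat.prime_two (2*ℓ*n) (Dvd.dvd.mul_right (dvd_mul_right 2 ℓ) n)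
        intro hcon
        have h2ℓ : 2 ∣ ℓ*n := by
          have e : 2*ℓ*n = 2*(ℓ*n) := by ring
          rw [e] at hcon
          exact (mul_dvd_mul_iff_left (by omega : (2:ℕ) ≠ 0)).mp hcon
        rcases hℓnodd with ⟨t, ht⟩
        omega
      · exact Nat.Coprime.mul (Nat.coprime_two_left.mpr hodd)
          ((Nat.Prime.coprime_iff_not_dvd hp).mpr hℓn)
      · have e : ((2*ℓ:ℕ):ℤ) + 1 = 2*(ℓ:ℤ) + 1 := by push_cast; ring
        rw [e]
        exact hdn
      · obtain ⟨u, v, huv⟩ := Nat.Prime.sq_add_sq (p := ℓ) (by omega)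
        refine ⟨(u:ℤ)+v, (u:ℤ)-v, ?_⟩
        have huv' : ((u:ℤ))^2 + (v:ℤ)^2 = (ℓ:ℤ) := by exact_mod_cast huv
        push_cast
        linear_combination 2 * huv'





lemma sq3_rat_of_squarefree (n : ℕ) (hsf : Squarefree n) (h8 : n % 8 ≠ 7) :
    ∃ a b c : ℚ, (n:ℚ) = a^2 + b^2 + c^2 := by
  have hn0 : n ≠ 0 := hsf.ne_zero
  by_cases h1 : n = 1
  · exact ⟨1, 0, 0, by rw [h1]; norm_num⟩
  have hn : 1 < n := by omega
  obtain ⟨B, hB1, hsqB, hsqBn, hcop, hd, hρ, u, v, huv⟩ := exists_sq3_data n hn hsf h8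
  obtain ⟨x, y, z, hxyz, hz⟩ := legendre_special B n hB1 hn hsqB
    (squarefree_not_isSquare hsf hn) hsqBn hcop hd hρ
  refine ⟨(x:ℚ)/(z:ℚ), ((u:ℚ)*(y:ℚ))/(z:ℚ), ((v:ℚ)*(y:ℚ))/(z:ℚ), ?_⟩
  have hzQ : ((z:ℚ)) ≠ 0 := by exact_mod_cast hz
  have h1' : ((x:ℚ))^2 + (B:ℚ)*(y:ℚ)^2 = (n:ℚ)*(z:ℚ)^2 := by exact_mod_cast hxyz
  have h2' : ((u:ℚ))^2 + (v:ℚ)^2 = (B:ℚ) := by exact_mod_cast huv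
  field_simp
  linear_combination (-1) * h1' - (y:ℚ)^2 * h2'

lemma sq3_rat_scale (T b a : ℕ) (hba : b^2 * a = T) (hsfa : Squarefree a)
    (h8 : a % 8 ≠ 7) : ∃ x y z : ℚ, (T:ℚ) = x^2 + y^2 + z^2 := by
  obtain ⟨x, y, z, h⟩ := sq3_rat_of_squarefree a hsfa h8
  refine ⟨b*x, b*y, b*z, ?_⟩
  have : ((T:ℚ)) = (b:ℚ)^2 * (a:ℚ) := by exact_mod_cast hba.symm
  rw [this, h]
  ring

lemma mod8_contra (m r a₀ b₀ a₂ b₂ : ℕ) (hm : 0 < m) (hr : 0 < r)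
    (h₀ : b₀^2 * a₀ = 2*r*m*(4*m+1)) (h₂ : b₂^2 * a₂ = 2*r*m*(4*m-3))
    (hc₀ : a₀ % 8 = 7) (hc₂ : a₂ % 8 = 7) : False := by
  set s := 4*m - 3 with hs
  have hs4 : s + 4 = 4*m + 1 := by omega
  have hsodd : Odd s := ⟨2*m - 2, by omega⟩
  have hu : ((4*m+1) * (4*m-3)) % 8 = 5 := by
    have h1 : (4*m+1) * (4*m-3) = s^2 + 4*s := by
      rw [← hs4]; ring
    have h2 := sq_mod8_eq_one hsodd
    rcases hsodd with ⟨t, ht⟩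
    omega
  have hT₀ : 0 < 2*r*m*(4*m+1) := by positivity
  have hT₂ : 0 < 2*r*m*(4*m-3) := by
    have : 0 < 4*m-3 := by omega
    positivity
  have hb₀ : b₀ ≠ 0 := by
    intro hc; rw [hc] at h₀; simp at h₀; omega
  have hb₂ : b₂ ≠ 0 := by
    intro hc; rw [hc] at h₂; simp at h₂; omega
  have ha₀ : a₀ ≠ 0 := by omega
  have ha₂ : a₂ ≠ 0 := by omega
  set d := 2*r*m with hd
  set w := b₀ * b₂ with hw
  set A := a₀ * a₂ with hA
  have hAmod : A % 8 = 1 := by rw [hA, Nat.mul_mod, hc₀, hc₂]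
  have hAodd : ¬ 2 ∣ A := by omega
  have key : w^2 * A = d^2 * ((4*m+1)*(4*m-3)) := by
    have e1 : w^2 * A = (b₀^2*a₀) * (b₂^2*a₂) := by rw [hw, hA]; ring
    rw [e1, h₀, h₂, hd]
    ring
  set u := (4*m+1)*(4*m-3) with hudef
  have huodd : ¬ 2 ∣ u := by omega
  have hd0 : d ≠ 0 := by positivity
  have hw0 : w ≠ 0 := by simp [hw, hb₀, hb₂]
  have hu0 : u ≠ 0 := by omega
  -- 2-adic valuations
  have hfac : (w^2*A).factorization 2 = (d^2*u).factorization 2 := by rw [key]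
  have hA0 : A ≠ 0 := by simp [hA, ha₀, ha₂]
  have hval : 2 * w.factorization 2 = 2 * d.factorization 2 := by
    have h1 : (w^2*A).factorization 2 = 2 * w.factorization 2 := by
      rw [Nat.factorization_mul (pow_ne_zero 2 hw0) hA0, Nat.factorization_pow]
      simp [Finsupp.add_apply, Finsupp.smul_apply, smul_eq_mul,
        Nat.factorization_eq_zero_of_not_dvd hAodd]
    have h2 : (d^2*u).factorization 2 = 2 * d.factorization 2 := by
      rw [Nat.factorization_mul (pow_ne_zero 2 hd0) hu0, Nat.factorization_pow]
      simp [Finsupp.add_apply, Finsupp.smul_apply, smul_eq_mul,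
        Nat.factorization_eq_zero_of_not_dvd huodd]
    rw [← h1, ← h2, hfac]
  set e := d.factorization 2 with he
  have hwe : w.factorization 2 = e := by omega
  set d₀ := d / 2^e with hd₀
  set w₀ := w / 2^e with hw₀
  have hdsplit : 2^e * d₀ = d := Nat.ordProj_mul_ordCompl_eq_self d 2
  have hwsplit : 2^e * w₀ = w := by
    rw [hw₀, ← hwe]
    exact Nat.ordProj_mul_ordCompl_eq_self w 2
  have hd₀odd : ¬ 2 ∣ d₀ := Nat.not_dvd_ordCompl Nat.prime_two hd0
  have hw₀odd : ¬ 2 ∣ w₀ := by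
    rw [hw₀, ← hwe]
    exact Nat.not_dvd_ordCompl Nat.prime_two hw0
  have hcancel : w₀^2 * A = d₀^2 * u := by
    have h1 : 2^(2*e) * (w₀^2 * A) = 2^(2*e) * (d₀^2 * u) := by
      calc 2^(2*e) * (w₀^2 * A) = (2^e * w₀)^2 * A := by ring
      _ = w^2 * A := by rw [hwsplit]
      _ = d^2 * u := key
      _ = (2^e * d₀)^2 * u := by rw [hdsplit]
      _ = 2^(2*e) * (d₀^2 * u) := by ring
    exact Nat.eq_of_mul_eq_mul_left (by positivity) h1
  have hw₀sq : w₀^2 % 8 = 1 := sq_mod8_eq_one (Nat.odd_iff.mpr (by omega))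
  have hd₀sq : d₀^2 % 8 = 1 := sq_mod8_eq_one (Nat.odd_iff.mpr (by omega))
  have hmm1 : (w₀^2 * A) % 8 = 1 := by rw [Nat.mul_mod, hw₀sq, hAmod]
  have hmm2 : (d₀^2 * u) % 8 = 5 := by rw [Nat.mul_mod, hd₀sq, hu]
  rw [hcancel] at hmm1
  omega

lemma selection (m r : ℕ) (hm : 0 < m) (hr : 0 < r) :
    ∃ k : ℕ, (k:ℚ)^2 ≤ 4*(m:ℚ)+1 ∧ ∃ x y z : ℚ,
      (2*(r:ℚ)*(m:ℚ))*(4*(m:ℚ)+1-(k:ℚ)^2) = x^2+y^2+z^2 := by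
  obtain ⟨a₀, b₀, h₀, hsf₀⟩ := Nat.sq_mul_squarefree (2*r*m*(4*m+1))
  obtain ⟨a₂, b₂, h₂, hsf₂⟩ := Nat.sq_mul_squarefree (2*r*m*(4*m-3))
  have hm1 : (1:ℚ) ≤ (m:ℚ) := by exact_mod_cast hm
  by_cases hc₀ : a₀ % 8 = 7
  · have hc₂ : a₂ % 8 ≠ 7 := fun hc => mod8_contra m r a₀ b₀ a₂ b₂ hm hr h₀ h₂ hc₀ hc
    obtain ⟨x, y, z, hxyz⟩ := sq3_rat_scale _ b₂ a₂ h₂ hsf₂ hc₂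
    refine ⟨2, by push_cast; nlinarith, x, y, z, ?_⟩
    rw [← hxyz]
    have hcst : ((2*r*m*(4*m-3) : ℕ) : ℚ) = 2*(r:ℚ)*m*(4*(m:ℚ)-3) := by
      push_cast [Nat.cast_sub (by omega : 3 ≤ 4*m)]
      ring
    rw [hcst]
    push_cast
    ring
  · obtain ⟨x, y, z, hxyz⟩ := sq3_rat_scale _ b₀ a₀ h₀ hsf₀ hc₀
    refine ⟨0, by norm_num; nlinarith, x, y, z, ?_⟩
    rw [← hxyz]
    push_cast
    ring

/-- the key solvability result -/
lemma core (m r : ℕ) (hm : 0 < m) (hr : 0 < r) :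
    ∃ x y z w : ℚ, 2*(r:ℚ)*(m:ℚ)*x^2 + y^2 + z^2 + w^2
      = (r:ℚ)*(4*(m:ℚ)+1)/(8*(m:ℚ)) := by
  obtain ⟨k, hk, x', y', z', hsol⟩ := selection m r hm hr
  refine ⟨(k:ℚ)/(4*m), x'/(4*m), y'/(4*m), z'/(4*m), ?_⟩
  have hm0 : (m:ℚ) ≠ 0 := by
    have : (0:ℚ) < m := by exact_mod_cast hm
    linarith
  field_simp
  linear_combination (-8)*hsol





section Model

variable (m : ℕ)

/-- ambient index type -/
abbrev Ω (m : ℕ) := (Fin 4 × Fin m) ⊕ Fin 3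

/-- block vector supported on block `s` -/
def blockVec (f : Fin 4 → ℚ) (s : Fin m) : Ω m → ℚ :=
  Sum.elim (fun q => if q.2 = s then f q.1 else 0) 0

/-- "constant across blocks" vector with tail -/
def constVec (c : Fin 4 → ℚ) (t : Fin 3 → ℚ) : Ω m → ℚ :=
  Sum.elim (fun q => c q.1) t

lemma dot_blockVec_blockVec (f g : Fin 4 → ℚ) (s s' : Fin m) :
    dot (blockVec m f s) (blockVec m g s') = if s = s' then ∑ a, f a * g a else 0 := by
  unfold dot blockVec
  rw [Fintype.sum_sum_type]
  simp only [Sum.elim_inl, Sum.elim_inr, Pi.zero_apply, zero_mul, Finset.sum_const_zero, add_zero]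
  rw [Fintype.sum_prod_type]
  by_cases hss : s = s'
  · subst hss
    rw [if_pos rfl]
    apply Finset.sum_congr rfl
    intro a _
    rw [Finset.sum_eq_single s]
    · simp
    · intro b _ hb
      simp [hb]
    · intro h; exact absurd (Finset.mem_univ s) h
  · rw [if_neg hss]
    apply Finset.sum_eq_zero
    intro a _
    apply Finset.sum_eq_zero
    intro b _
    by_cases hb : b = s
    · have hb' : ¬ (b = s') := fun hc => hss (hb ▸ hc ▸ rfl)
      rw [if_pos hb, if_neg hb', mul_zero]
    · rw [if_neg hb, zero_mul]

lemma dot_blockVec_constVec (f : Fin 4 → ℚ) (s : Fin m) (c : Fin 4 → ℚ) (t : Fin 3 → ℚ) :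
    dot (blockVec m f s) (constVec m c t) = ∑ a, f a * c a := by
  unfold dot blockVec constVec
  rw [Fintype.sum_sum_type]
  simp only [Sum.elim_inl, Sum.elim_inr, Pi.zero_apply, zero_mul, Finset.sum_const_zero, add_zero]
  rw [Fintype.sum_prod_type]
  apply Finset.sum_congr rfl
  intro a _
  rw [Finset.sum_eq_single s]
  · simp
  · intro b _ hb
    simp [hb]
  · intro h; exact absurd (Finset.mem_univ s) h

lemma dot_constVec_constVec (c c' : Fin 4 → ℚ) (t t' : Fin 3 → ℚ) :
    dot (constVec m c t) (constVec m c' t') = m * (∑ a, c a * c' a) + ∑ j, t j * t' j := by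
  unfold dot constVec
  rw [Fintype.sum_sum_type]
  simp only [Sum.elim_inl, Sum.elim_inr]
  rw [Fintype.sum_prod_type]
  congr 1
  have hs : ∀ a : Fin 4, (∑ _s : Fin m, c a * c' a) = (m:ℚ) * (c a * c' a) := by
    intro a
    rw [Finset.sum_const, Finset.card_univ, Fintype.card_fin, nsmul_eq_mul]
  calc (∑ a : Fin 4, ∑ _s : Fin m, c a * c' a) = ∑ a : Fin 4, (m:ℚ) * (c a * c' a) :=
        Finset.sum_congr rfl (fun a _ => hs a)
    _ = m * (∑ a, c a * c' a) := by rw [Finset.mul_sum]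

/-- the quaternion matrix -/
def Hm (h0 h1 h2 h3 : ℚ) : Fin 4 → Fin 4 → ℚ :=
  ![![h0,h1,h2,h3], ![-h1,h0,h3,-h2], ![-h2,-h3,h0,h1], ![-h3,h2,-h1,h0]]

lemma Hm_orth (h0 h1 h2 h3 : ℚ) (a b : Fin 4) :
    ∑ c, Hm h0 h1 h2 h3 a c * Hm h0 h1 h2 h3 b c
      = if a = b then h0^2+h1^2+h2^2+h3^2 else 0 := by
  fin_cases a <;> fin_cases b <;>
    simp [Hm, Fin.sum_univ_four] <;> ring

/-- column sums of `Hm` -/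
def Hcol (h0 h1 h2 h3 : ℚ) : Fin 4 → ℚ := fun c => ∑ a, Hm h0 h1 h2 h3 a c

lemma Hm_col (h0 h1 h2 h3 : ℚ) (a : Fin 4) :
    ∑ c, Hm h0 h1 h2 h3 a c * Hcol h0 h1 h2 h3 c = h0^2+h1^2+h2^2+h3^2 := by
  fin_cases a <;>
    simp [Hm, Hcol, Fin.sum_univ_four] <;> ring

lemma Hcol_sq (h0 h1 h2 h3 : ℚ) :
    ∑ c, Hcol h0 h1 h2 h3 c * Hcol h0 h1 h2 h3 c = 4*(h0^2+h1^2+h2^2+h3^2) := by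
  simp [Hcol, Hm, Fin.sum_univ_four]
  ring

end Model

/-- the standard model: a clique of `4m+1` points, abstract index version -/
lemma model_exists (m r : ℕ) (hm : 0 < m) (hr : 0 < r)
    (hcore : ∃ x y z w : ℚ, 2*(r:ℚ)*(m:ℚ)*x^2 + y^2 + z^2 + w^2
      = (r:ℚ)*(4*(m:ℚ)+1)/(8*(m:ℚ))) :
    ∃ S : Option (Fin 4 × Fin m) → (Ω m → ℚ),
      ∀ o o', o ≠ o' → dot (S o - S o') (S o - S o') = (r:ℚ) := by
  obtain ⟨x, y, z, wq, hxy⟩ := hcore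
  obtain ⟨a, b, c, d, habcd⟩ := Nat.sum_four_squares r
  set h0 : ℚ := ((a:ℚ)+b)/2 with hh0
  set h1 : ℚ := ((a:ℚ)-b)/2 with hh1
  set h2 : ℚ := ((c:ℚ)+d)/2 with hh2
  set h3 : ℚ := ((c:ℚ)-d)/2 with hh3
  have hmQ : ((m:ℚ)) ≠ 0 := by
    have : (0:ℚ) < m := by exact_mod_cast hm
    linarith
  have hq : h0^2+h1^2+h2^2+h3^2 = (r:ℚ)/2 := by
    have : ((a:ℚ))^2+(b:ℚ)^2+(c:ℚ)^2+(d:ℚ)^2 = (r:ℚ) := by exact_mod_cast habcd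
    rw [hh0, hh1, hh2, hh3]
    field_simp
    linarith [this]
  set q : ℚ := h0^2+h1^2+h2^2+h3^2 with hqdef
  set κ : ℚ := x - 1/(4*m) with hκ
  set t : Fin 3 → ℚ := ![y, z, wq] with ht
  set τ : Ω m → ℚ := constVec m (fun cc => κ * Hcol h0 h1 h2 h3 cc) t with hτ
  set W : Fin 4 × Fin m → Ω m → ℚ := fun p => blockVec m (Hm h0 h1 h2 h3 p.1) p.2 with hW
  have hWW : ∀ p p' : Fin 4 × Fin m, dot (W p) (W p') = if p = p' then q else 0 := by
    intro p p'
    rw [hW]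
    simp only []
    rw [dot_blockVec_blockVec, Hm_orth]
    rcases p with ⟨pa, ps⟩
    rcases p' with ⟨pa', ps'⟩
    by_cases hps : ps = ps'
    · subst hps
      by_cases hpa : pa = pa'
      · subst hpa
        rw [if_pos rfl, if_pos rfl, if_pos rfl]
      · rw [if_pos rfl, if_neg hpa, if_neg (by simp [Prod.ext_iff, hpa])]
    · rw [if_neg hps, if_neg (by simp [Prod.ext_iff, hps])]
  have hWτ : ∀ p : Fin 4 × Fin m, dot (W p) τ = κ * q := by
    intro p
    rw [hW, hτ]
    simp only []
    rw [dot_blockVec_constVec]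
    have e : ∀ cc, Hm h0 h1 h2 h3 p.1 cc * (κ * Hcol h0 h1 h2 h3 cc)
        = κ * (Hm h0 h1 h2 h3 p.1 cc * Hcol h0 h1 h2 h3 cc) := fun cc => by ring
    rw [Finset.sum_congr rfl (fun cc _ => e cc), ← Finset.mul_sum, Hm_col]
  have hττ : dot τ τ = κ^2 * (4*m*q) + (y^2+z^2+wq^2) := by
    rw [hτ]
    rw [dot_constVec_constVec]
    have e : ∀ cc, (κ * Hcol h0 h1 h2 h3 cc) * (κ * Hcol h0 h1 h2 h3 cc)
        = κ^2 * (Hcol h0 h1 h2 h3 cc * Hcol h0 h1 h2 h3 cc) := fun cc => by ring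
    rw [Finset.sum_congr rfl (fun cc _ => e cc), ← Finset.mul_sum, Hcol_sq]
    rw [ht]
    simp [Fin.sum_univ_three]
    ring
  -- bilinearity helpers
  have dot_add_left' : ∀ (u v w : Ω m → ℚ), dot (u + v) w = dot u w + dot v w := by
    intro u v w
    unfold dot
    simp [add_mul, Finset.sum_add_distrib]
  have dot_comm' : ∀ (u v : Ω m → ℚ), dot u v = dot v u := by
    intro u v
    unfold dot
    exact Finset.sum_congr rfl fun i _ => mul_comm _ _
  have dot_sub_expand : ∀ (u v : Ω m → ℚ), dot (u - v) (u - v)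
      = dot u u - 2 * dot u v + dot v v := by
    intro u v
    unfold dot
    rw [Finset.mul_sum]
    rw [← Finset.sum_sub_distrib, ← Finset.sum_add_distrib]
    apply Finset.sum_congr rfl
    intro i _
    simp only [Pi.sub_apply]
    ring
  refine ⟨fun o => Option.elim o 0 (fun p => W p + τ), ?_⟩
  have key : ∀ p : Fin 4 × Fin m, dot (W p + τ) (W p + τ) = (r:ℚ) := by
    intro p
    rw [dot_add_left']
    rw [dot_comm' (W p) (W p + τ), dot_add_left', dot_comm' τ (W p + τ), dot_add_left']
    rw [hWW p p, if_pos rfl, hWτ p, dot_comm' τ (W p), hWτ p, hττ]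
    rw [hq, hκ]
    have hxy' : (2*(r:ℚ)*(m:ℚ)*x^2 + y^2 + z^2 + wq^2) * (8*(m:ℚ)) = (r:ℚ)*(4*(m:ℚ)+1) := by
      rw [hxy]
      field_simp
    field_simp
    linear_combination hxy'
  intro o o' hoo
  match o, o' with
  | none, none => exact absurd rfl hoo
  | some p, none =>
    simp only [Option.elim]
    rw [sub_zero]
    exact key p
  | none, some p =>
    simp only [Option.elim]
    rw [zero_sub]
    have hneg : dot (-(W p + τ)) (-(W p + τ)) = dot (W p + τ) (W p + τ) := by
      unfold dot
      apply Finset.sum_congr rfl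
      intro i _
      simp only [Pi.neg_apply, Pi.add_apply]
      ring
    rw [hneg]
    exact key p
  | some p, some p' =>
    have hpp : p ≠ p' := fun hc => hoo (by rw [hc])
    simp only [Option.elim]
    have e : (W p + τ) - (W p' + τ) = W p - W p' := by abel
    rw [e, dot_sub_expand, hWW p p, hWW p' p', hWW p p', if_pos rfl, if_pos rfl,
      if_neg hpp, hq]
    ring


/-- the standard clique on `Fin (4m+1)` in coordinates `Fin (4m+3)` -/
lemma model_clique (m r : ℕ) (hm : 0 < m) (hr : 0 < r)
    (hcore : ∃ x y z w : ℚ, 2*(r:ℚ)*(m:ℚ)*x^2 + y^2 + z^2 + w^2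
      = (r:ℚ)*(4*(m:ℚ)+1)/(8*(m:ℚ))) :
    ∃ C : Fin (4*m+1) → (Fin (4*m+3) → ℚ),
      ∀ i j, i ≠ j → ∑ k, (C i k - C j k)^2 = (r:ℚ) := by
  obtain ⟨S, hS⟩ := model_exists m r hm hr hcore
  set e : Ω m ≃ Fin (4*m+3) :=
    ((Equiv.sumCongr finProdFinEquiv (Equiv.refl (Fin 3))).trans finSumFinEquiv) with he
  set F : Fin (4*m+1) ≃ Option (Fin 4 × Fin m) :=
    (finSuccEquiv (4*m)).trans (Equiv.optionCongr finProdFinEquiv.symm) with hF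
  refine ⟨fun i k => S (F i) (e.symm k), ?_⟩
  intro i j hij
  have hne : F i ≠ F j := fun hc => hij (F.injective hc)
  have hSS := hS (F i) (F j) hne
  have h1 : (∑ k, (S (F i) (e.symm k) - S (F j) (e.symm k))^2)
      = ∑ ω, (S (F i) ω - S (F j) ω)^2 :=
    Equiv.sum_comp e.symm (fun ω => (S (F i) ω - S (F j) ω)^2)
  rw [h1, ← hSS]
  unfold dot
  apply Finset.sum_congr rfl
  intro ω _
  simp only [Pi.sub_apply]
  ring

lemma dot_sum_left' {ι : Type*} [Fintype ι] {κ : Type*} [Fintype κ]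
    (f : κ → ι → ℚ) (y : ι → ℚ) :
    dot (∑ i, f i) y = ∑ i, dot (f i) y := by
  unfold dot
  rw [Finset.sum_comm]
  apply Finset.sum_congr rfl
  intro k _
  rw [Finset.sum_apply, Finset.sum_mul]

/-- pairwise equidistant points in `ℚⁿ` number at most `n+1` -/
lemma clique_card_le {n M : ℕ} {d : ℚ} (hd : 0 < d) (p : Fin M → (Fin n → ℚ))
    (hp : ∀ i j, i ≠ j → ∑ k, (p i k - p j k)^2 = d) : M ≤ n + 1 := by
  rcases Nat.eq_zero_or_pos M with rfl | hM
  · omega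
  obtain ⟨M', rfl⟩ : ∃ M', M = M' + 1 := ⟨M - 1, by omega⟩
  set v : Fin M' → (Fin n → ℚ) := fun i => p i.succ - p 0 with hv
  have hp' : ∀ i j, i ≠ j → dot (p i - p j) (p i - p j) = d := by
    intro i j hij
    rw [← dot_self_eq_sum_sq]
    exact hp i j hij
  have hg := gram_of_clique d p 0 hp'
  have hdot : ∀ i j : Fin M', dot (v i) (v j) = if i = j then d else d/2 := by
    intro i j
    rw [hv]
    simp only []
    rw [hg i.succ j.succ]
    rw [if_neg (by push_neg; exact ⟨Fin.succ_ne_zero i, Fin.succ_ne_zero j⟩)]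
    by_cases hij : i = j
    · subst hij; simp
    · rw [if_neg (by simpa [Fin.succ_inj] using hij), if_neg hij]
  have hli : LinearIndependent ℚ v := by
    rw [Fintype.linearIndependent_iff]
    intro g hg0
    have hS' : ∀ j, g j + ∑ i, g i = 0 := by
      intro j
      have happ : dot (∑ i, g i • v i) (v j) = 0 := by rw [hg0]; exact dot_zero_left _
      rw [dot_sum_left'] at happ
      have e1 : ∀ i : Fin M', dot (g i • v i) (v j) = g i * (if i = j then d else d/2) := by
        intro i; rw [dot_smul_left, hdot]
      rw [Finset.sum_congr rfl (fun i _ => e1 i)] at happ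
      have e2 : ∀ i : Fin M', g i * (if i = j then d else d/2)
          = g i * (d/2) + (if i = j then g i * (d/2) else 0) := by
        intro i
        by_cases h : i = j
        · subst h; rw [if_pos rfl, if_pos rfl]; ring
        · rw [if_neg h, if_neg h]; ring
      rw [Finset.sum_congr rfl (fun i _ => e2 i), Finset.sum_add_distrib,
        Finset.sum_ite_eq' Finset.univ j] at happ
      rw [if_pos (Finset.mem_univ j), ← Finset.sum_mul] at happ
      have hd2 : d/2 ≠ 0 := by positivity
      have : ((∑ i, g i) + g j) * (d/2) = 0 := by linarith [happ]
      have h0 := (mul_eq_zero.mp this).resolve_right hd2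
      linarith [h0]
    have hsum0 : (∑ i, g i) = 0 := by
      have hsum : (∑ j, (g j + ∑ i, g i)) = 0 := Finset.sum_eq_zero (fun j _ => hS' j)
      rw [Finset.sum_add_distrib, Finset.sum_const, Finset.card_univ, Fintype.card_fin,
        nsmul_eq_mul] at hsum
      have hM' : (0:ℚ) ≤ (M':ℚ) := Nat.cast_nonneg M'
      nlinarith [hsum]
    intro j
    have := hS' j
    rw [hsum0] at this
    linarith
  have hcard := hli.fintype_card_le_finrank
  rw [Fintype.card_fin, Module.finrank_fintype_fun_eq_card, Fintype.card_fin] at hcard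
  omega

end S15

/-- `hasCliqueQ n m d` : there exist `m` points of `ℚⁿ` pairwise at squared
Euclidean distance `d`. -/
def hasCliqueQ (n m : ℕ) (d : ℚ) : Prop :=
  ∃ p : Fin m → (Fin n → ℚ), ∀ i j, i ≠ j → ∑ k, (p i k - p j k) ^ 2 = d

/-- `d` (as a squared distance) is realized between points of `ℚⁿ`. -/
def realizedQ (n : ℕ) (d : ℚ) : Prop :=
  0 < d ∧ ∃ p q : Fin n → ℚ, ∑ k, (p k - q k) ^ 2 = d

/-- The clique number `ω(ℚⁿ, √d)` (with `d` the squared distance). -/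
noncomputable def omegaQ (n : ℕ) (d : ℚ) : ℕ := sSup {m | hasCliqueQ n m d}

/-- `C₁(ℚⁿ)`: the maximum of `ω(ℚⁿ, √d)` over realized squared distances `d`. -/
noncomputable def C1Q (n : ℕ) : ℕ := sSup {m | ∃ d, realizedQ n d ∧ hasCliqueQ n m d}

/-- `c₁(ℚⁿ)`: the minimum of `ω(ℚⁿ, √d)` over realized squared distances `d`. -/
noncomputable def c1Q (n : ℕ) : ℕ := sInf {k | ∃ d, realizedQ n d ∧ omegaQ n d = k}

/-- For `n = 4m + 3 ≡ 3 (mod 4)` and any positive integer `r`: every `n - 3 = 4m`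
points of `ℚⁿ` pairwise at distance `√r` extend by a further point of `ℚⁿ` at
distance `√r` from all of them; consequently `ω(ℚⁿ, √r) ≥ n - 2` and
`C₁(ℚⁿ) - c₁(ℚⁿ) ≤ 3`. -/
theorem stmt_15 (m r : ℕ) (hm : 0 < m) (hr : 0 < r) :
    (∀ P : Fin (4 * m) → (Fin (4 * m + 3) → ℚ),
      (∀ i j, i ≠ j → ∑ k, (P i k - P j k) ^ 2 = (r : ℚ)) →
      ∃ Q : Fin (4 * m + 3) → ℚ, ∀ i, ∑ k, (Q k - P i k) ^ 2 = (r : ℚ)) ∧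
    (4 * m + 3) - 2 ≤ omegaQ (4 * m + 3) (r : ℚ) ∧
    C1Q (4 * m + 3) - c1Q (4 * m + 3) ≤ 3 := by
  have hrQ : (0:ℚ) < r := by exact_mod_cast hr
  obtain ⟨C, hC⟩ := S15.model_clique m r hm hr (S15.core m r hm hr)
  have hclique : hasCliqueQ (4*m+3) (4*m+1) (r:ℚ) := ⟨C, hC⟩
  have hbdd : ∀ (d : ℚ), 0 < d → BddAbove {M | hasCliqueQ (4*m+3) M d} := by
    intro d hd
    refine ⟨4*m+4, fun M hM => ?_⟩
    obtain ⟨p, hp⟩ := hM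
    have := S15.clique_card_le hd p hp
    omega
  have hscale : ∀ d : ℚ, 0 < d → hasCliqueQ (4*m+3) (4*m+1) d := by
    intro d hd
    set r' : ℕ := (d.num).toNat * d.den with hr'
    have hnum : 0 < d.num := Rat.num_pos.mpr hd
    have hr'pos : 0 < r' := by
      rw [hr']
      exact Nat.mul_pos (by omega) d.pos
    obtain ⟨C', hC'⟩ := S15.model_clique m r' hm hr'pos (S15.core m r' hm hr'pos)
    refine ⟨fun i k => (1/(d.den:ℚ)) * C' i k, ?_⟩
    intro i j hij
    have hden : ((d.den:ℚ)) ≠ 0 := Nat.cast_ne_zero.mpr d.den_nz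
    have hsum := hC' i j hij
    have e : ∀ k, ((1/(d.den:ℚ)) * C' i k - (1/(d.den:ℚ)) * C' j k)^2
        = (1/(d.den:ℚ))^2 * (C' i k - C' j k)^2 := fun k => by ring
    rw [Finset.sum_congr rfl (fun k _ => e k), ← Finset.mul_sum, hsum]
    have h1 : ((r' : ℕ) : ℚ) = (d.num : ℚ) * (d.den : ℚ) := by
      rw [hr']
      push_cast
      have h2 : ((d.num.toNat : ℤ) : ℚ) = ((d.num : ℤ) : ℚ) := by
        rw [Int.toNat_of_nonneg hnum.le]
      have h3 : ((d.num.toNat : ℕ) : ℚ) = ((d.num.toNat : ℤ) : ℚ) := by push_cast; ring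
      rw [h3, h2]
    rw [h1]
    calc (1/(d.den:ℚ))^2 * ((d.num:ℚ) * (d.den:ℚ)) = (d.num:ℚ)/(d.den:ℚ) := by
          field_simp
      _ = d := Rat.num_div_den d
  refine ⟨?_, ?_, ?_⟩
  · intro P hP
    have hP' : ∀ i j, i ≠ j → S15.dot (P i - P j) (P i - P j) = (r:ℚ) := fun i j hij => by
      rw [← S15.dot_self_eq_sum_sq]; exact hP i j hij
    have hC' : ∀ i j, i ≠ j → S15.dot (C i - C j) (C i - C j) = (r:ℚ) := fun i j hij => by
      rw [← S15.dot_self_eq_sum_sq]; exact hC i j hij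
    obtain ⟨Q, hQ⟩ := S15.extend_of_model (by omega : 0 < 4*m) (r:ℚ) C hC' P hP'
    exact ⟨Q, fun i => by rw [S15.dot_self_eq_sum_sq]; exact hQ i⟩
  · have h2 : 4*m+3-2 = 4*m+1 := by omega
    rw [h2]
    exact le_csSup (hbdd (r:ℚ) hrQ) hclique
  · have hreal1 : realizedQ (4*m+3) 1 := by
      refine ⟨one_pos, (fun k => if k = ⟨0, by omega⟩ then 1 else 0), 0, ?_⟩
      have e : ∀ k : Fin (4*m+3),
          ((if k = (⟨0, by omega⟩ : Fin (4*m+3)) then (1:ℚ) else 0) - (0 : Fin (4*m+3) → ℚ) k)^2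
          = if k = (⟨0, by omega⟩ : Fin (4*m+3)) then (1:ℚ) else 0 := by
        intro k
        by_cases h : k = (⟨0, by omega⟩ : Fin (4*m+3)) <;> simp [h] <;> simp_all
      rw [Finset.sum_congr rfl (fun k _ => e k), Finset.sum_ite_eq' Finset.univ]
      simp
    have hC1 : C1Q (4*m+3) ≤ 4*m+4 := by
      apply csSup_le
      · exact ⟨0, 1, hreal1, ⟨fun i => i.elim0, fun i j _ => i.elim0⟩⟩
      · rintro M ⟨d, ⟨hd, -⟩, p, hp⟩
        have := S15.clique_card_le hd p hp
        omega
    have hc1 : 4*m+1 ≤ c1Q (4*m+3) := by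
      apply le_csInf
      · exact ⟨omegaQ (4*m+3) 1, 1, hreal1, rfl⟩
      · rintro k ⟨d, ⟨hd, -⟩, rfl⟩
        exact le_csSup (hbdd d hd) (hscale d hd)
    omega
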